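/- Let ω = e^{2πi/3}. Then R(ω) = ω̄ and R(ω̄) = ω, so {ω, ω̄} is a periodic cycle of R of period 2. Moreover R′(ω) = 2 and R′(ω̄) = 2, so the multiplier of the cycle is R′(ω)·R′(ω̄) = 4, and each of ω, ω̄ is a repelling fixed point of R∘R with (R∘R)′(ω) = 4. -/

import Mathlib

open Complex

/-- The exact RG map of the 3-state Potts model on the one-dimensional
(`b = 1`) hierarchical lattice. -/
noncomputable def pottsR (y : ℂ) : ℂ := (y ^ 2 + 2) / (2 * y + 1)

lemma pottsR_hasDerivAt (a : ℂ) (h : 2 * a + 1 ≠ 0) :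
    HasDerivAt pottsR ((2 * a * (2 * a + 1) - (a ^ 2 + 2) * 2) / (2 * a + 1) ^ 2) a := by
  have h1 : HasDerivAt (fun y : ℂ => y ^ 2 + 2) (2 * a) a := by
    simpa using (hasDerivAt_pow 2 a).add_const 2
  have h2 : HasDerivAt (fun y : ℂ => 2 * y + 1) 2 a := by
    simpa using ((hasDerivAt_id a).const_mul 2).add_const 1
  exact h1.div h2 h

/-- `{ω, ω̄}` with `ω = e^{2πi/3}` is a repelling period-2 cycle of `R`,
with multiplier `R'(ω)·R'(ω̄) = 4`. -/
theorem stmt_3 :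
    let ω : ℂ := Complex.exp (2 * Real.pi * I / 3)
    pottsR ω = (starRingEnd ℂ) ω ∧
    pottsR ((starRingEnd ℂ) ω) = ω ∧
    deriv pottsR ω = 2 ∧
    deriv pottsR ((starRingEnd ℂ) ω) = 2 ∧
    deriv pottsR ω * deriv pottsR ((starRingEnd ℂ) ω) = 4 ∧
    pottsR (pottsR ω) = ω ∧
    pottsR (pottsR ((starRingEnd ℂ) ω)) = (starRingEnd ℂ) ω ∧
    deriv (pottsR ∘ pottsR) ω = 4 ∧
    deriv (pottsR ∘ pottsR) ((starRingEnd ℂ) ω) = 4 := by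
  intro ω
  have hω3 : ω ^ 3 = 1 := by
    show Complex.exp (2 * Real.pi * I / 3) ^ 3 = 1
    rw [← Complex.exp_nat_mul]
    have h : ((3 : ℕ) : ℂ) * (2 * Real.pi * I / 3) = 2 * Real.pi * I := by
      push_cast; ring
    rw [h, Complex.exp_two_pi_mul_I]
  have hω1 : ω ≠ 1 := by
    intro h
    have h' : Complex.exp (2 * Real.pi * I / 3) = 1 := h
    rw [Complex.exp_eq_one_iff] at h'
    obtain ⟨n, hn⟩ := h'
    have h2pi : (2 : ℂ) * Real.pi * I ≠ 0 := by
      simp [Real.pi_ne_zero, I_ne_zero, Complex.ofReal_ne_zero]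
    have h1 : (1 : ℂ) = 3 * n :=
      mul_left_cancel₀ h2pi (by linear_combination 3 * hn)
    have h2 : (3 * n : ℤ) = 1 := by exact_mod_cast h1.symm
    omega
  have hsum : ω ^ 2 + ω + 1 = 0 := by
    have hfac : (ω - 1) * (ω ^ 2 + ω + 1) = 0 := by linear_combination hω3
    rcases mul_eq_zero.mp hfac with h | h
    · exact absurd (by linear_combination h) hω1
    · exact h
  have hconj : (starRingEnd ℂ) ω = ω ^ 2 := by
    have hmul : ω * (starRingEnd ℂ) ω = 1 := by
      show Complex.exp _ * (starRingEnd ℂ) (Complex.exp _) = 1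
      rw [← Complex.exp_conj, ← Complex.exp_add]
      have h : 2 * (Real.pi : ℂ) * I / 3 + (starRingEnd ℂ) (2 * (Real.pi : ℂ) * I / 3)
          = 0 := by
        simp [map_div₀, map_mul, map_ofNat, Complex.conj_I, Complex.conj_ofReal]
        ring
      rw [h, Complex.exp_zero]
    linear_combination ω ^ 2 * hmul - (starRingEnd ℂ) ω * hω3
  have hne : 2 * ω + 1 ≠ 0 := by
    intro h
    have hω : ω = -1/2 := by linear_combination h / 2
    rw [hω] at hsum; norm_num at hsum
  have hne2 : 2 * ω ^ 2 + 1 ≠ 0 := by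
    intro h
    have hω : ω = -1/2 := by linear_combination hsum - h / 2
    rw [hω] at h; norm_num at h
  have hRω : pottsR ω = ω ^ 2 := by
    rw [pottsR, div_eq_iff hne]
    linear_combination (-2 : ℂ) * hω3
  have hRω2 : pottsR (ω ^ 2) = ω := by
    rw [pottsR, div_eq_iff hne2]
    linear_combination (ω - 2 : ℂ) * hω3
  have hval1 : (2 * ω * (2 * ω + 1) - (ω ^ 2 + 2) * 2) / (2 * ω + 1) ^ 2 = 2 := by
    rw [div_eq_iff (pow_ne_zero 2 hne)]
    linear_combination (-6 : ℂ) * hsum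
  have hd1 : HasDerivAt pottsR 2 ω := hval1 ▸ pottsR_hasDerivAt ω hne
  have hval2 : (2 * ω ^ 2 * (2 * ω ^ 2 + 1) - ((ω ^ 2) ^ 2 + 2) * 2) / (2 * ω ^ 2 + 1) ^ 2
      = 2 := by
    rw [div_eq_iff (pow_ne_zero 2 hne2)]
    linear_combination (-6 : ℂ) * hsum + (-6 * ω : ℂ) * hω3
  have hd2 : HasDerivAt pottsR 2 (ω ^ 2) := hval2 ▸ pottsR_hasDerivAt (ω ^ 2) hne2
  have hd2' : HasDerivAt pottsR 2 (pottsR ω) := by rw [hRω]; exact hd2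
  have hd1' : HasDerivAt pottsR 2 (pottsR (ω ^ 2)) := by rw [hRω2]; exact hd1
  have hcomp1 : HasDerivAt (pottsR ∘ pottsR) 4 ω := by
    have := HasDerivAt.comp ω hd2' hd1
    norm_num at this; exact this
  have hcomp2 : HasDerivAt (pottsR ∘ pottsR) 4 (ω ^ 2) := by
    have := HasDerivAt.comp (ω ^ 2) hd1' hd2
    norm_num at this; exact this
  refine ⟨?_, ?_, ?_, ?_, ?_, ?_, ?_, ?_, ?_⟩
  · rw [hRω, hconj]
  · rw [hconj, hRω2]
  · exact hd1.deriv
  · rw [hconj]; exact hd2.deriv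
  · rw [hd1.deriv, hconj, hd2.deriv]; norm_num
  · rw [hRω, hRω2]
  · rw [hconj, hRω2, hRω]
  · exact hcomp1.deriv
  · rw [hconj]; exact hcomp2.deriv
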